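/- Let B be a finite set of blocks with half-widths w_i ≥ 0 and masses m_i > 0, let p ∈ B and π a permutation of B (the stacking order, top to bottom). Define M_i = Σ_{j: π(j) ≤ π(i)} m_j, and let OPT = w_p·(2 − m_p/M_p) + Σ_{i: π(i) > π(p)} w_i·m_i/M_i be the overhang of a stack with counterbalancing and protruding block p. Then the fully right-aligned stack obtained by moving p to the top (keeping the relative order of the other blocks) has overhang at least OPT/2. -/

import Mathlib

open Finset

/-- Moving the protruding block `p` to the top (keeping the relative order of
the other blocks) yields a fully right-aligned stack with at least half the
overhang of the original stack with counterbalancing. -/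
theorem right_aligned_two_approx (n : ℕ) (w m : Fin n → ℝ)
    (hw : ∀ i, 0 ≤ w i) (hm : ∀ i, 0 < m i) (p : Fin n)
    (π π' : Equiv.Perm (Fin n))
    (htop : ∀ i, π' p ≤ π' i)
    (hrel : ∀ a b, a ≠ p → b ≠ p → (π' a < π' b ↔ π a < π b)) :
    let M : Fin n → ℝ := fun i => ∑ j ∈ Finset.univ.filter (fun j => π j ≤ π i), m j
    let M' : Fin n → ℝ := fun i => ∑ j ∈ Finset.univ.filter (fun j => π' j ≤ π' i), m j
    (∑ i, w i * m i / M' i)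
      ≥ (w p * (2 - m p / M p)
          + ∑ i ∈ Finset.univ.filter (fun i => π p < π i), w i * m i / M i) / 2 := by
  intro M M'
  have hMpos : ∀ i, 0 < M i := by
    intro i
    refine Finset.sum_pos (fun j _ => hm j) ⟨i, ?_⟩
    simp
  have hM'pos : ∀ i, 0 < M' i := by
    intro i
    refine Finset.sum_pos (fun j _ => hm j) ⟨i, ?_⟩
    simp
  have hM'p : M' p = m p := by
    have : Finset.univ.filter (fun j => π' j ≤ π' p) = {p} := by
      ext j
      simp only [Finset.mem_filter, Finset.mem_univ, true_and, Finset.mem_singleton]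
      constructor
      · intro h
        exact π'.injective (le_antisymm h (htop j))
      · rintro rfl; exact le_refl _
    simp [M', this]
  set Sf := Finset.univ.filter (fun i => π p < π i) with hSf
  have hMeq : ∀ i ∈ Sf, M' i = M i := by
    intro i hi
    have hip : π p < π i := by simpa [hSf] using hi
    have hine : i ≠ p := by
      intro h; subst h; exact lt_irrefl _ hip
    have : Finset.univ.filter (fun j => π' j ≤ π' i) =
        Finset.univ.filter (fun j => π j ≤ π i) := by
      ext j
      simp only [Finset.mem_filter, Finset.mem_univ, true_and]
      by_cases hj : j = p
      · subst hj
        constructor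
        · intro _; exact le_of_lt hip
        · intro _; exact htop i
      · have h1 : π' i < π' j ↔ π i < π j := hrel i j hine hj
        constructor
        · intro h; exact not_lt.mp (fun hc => absurd (h1.mpr hc) (not_lt.mpr h))
        · intro h; exact not_lt.mp (fun hc => absurd (h1.mp hc) (not_lt.mpr h))
    simp [M', M, this]
  have hpS : p ∉ Sf := by simp [hSf]
  have hsub : (insert p Sf) ⊆ Finset.univ := Finset.subset_univ _
  have hstep : (∑ i, w i * m i / M' i) ≥ ∑ i ∈ insert p Sf, w i * m i / M' i := by
    refine Finset.sum_le_sum_of_subset_of_nonneg hsub ?_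
    intro i _ _
    exact div_nonneg (mul_nonneg (hw i) (le_of_lt (hm i))) (le_of_lt (hM'pos i))
  have hins : ∑ i ∈ insert p Sf, w i * m i / M' i
      = w p + ∑ i ∈ Sf, w i * m i / M i := by
    rw [Finset.sum_insert hpS, hM'p]
    rw [Finset.sum_congr rfl (fun i hi => by rw [hMeq i hi])]
    have : w p * m p / m p = w p := by
      rw [mul_div_assoc, div_self (ne_of_gt (hm p)), mul_one]
    rw [this]
  have hS0 : 0 ≤ ∑ i ∈ Sf, w i * m i / M i :=
    Finset.sum_nonneg fun i _ =>
      div_nonneg (mul_nonneg (hw i) (le_of_lt (hm i))) (le_of_lt (hMpos i))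
  have hr : 0 ≤ m p / M p := div_nonneg (le_of_lt (hm p)) (le_of_lt (hMpos p))
  have hwp : w p * (2 - m p / M p) ≤ 2 * w p := by nlinarith [hw p]
  rw [ge_iff_le] at hstep ⊢
  rw [hins] at hstep
  linarith
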